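/- Let k be an algebraically closed field of characteristic p > 0. Let A ⊆ B be commutative k-algebras, both finitely generated as k-algebras, with B finite as an A-module (i.e. B is a finitely generated A-module). Assume the inclusion A ⊆ B induces a bijection on k-valued points, i.e. the map sending a k-algebra homomorphism B → k to its restriction A → k is a bijection from the set of k-algebra homomorphisms B → k onto the set of k-algebra homomorphisms A → k. Then for every b ∈ B there exists a natural number m such that b^(p^m) ∈ A. -/

import Mathlib

/-- Two `k`-algebra homomorphisms into `k` agree if the kernel of one is contained in the
kernel of the other. -/
private theorem algHom_eq_of_ker_le {k S : Type*} [Field k] [CommRing S] [Algebra k S]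
    {φ ψ : S →ₐ[k] k} (h : ∀ s, φ s = 0 → ψ s = 0) : ψ = φ := by
  ext s
  have h2 : φ (s - algebraMap k S (φ s)) = 0 := by
    rw [map_sub, AlgHom.commutes, Algebra.algebraMap_self_apply, sub_self]
  have h3 := h _ h2
  rw [map_sub, AlgHom.commutes, Algebra.algebraMap_self_apply, sub_eq_zero] at h3
  exact h3

/-- Nullstellensatz-type residue lemma: every maximal ideal of a finitely generated algebra
over an algebraically closed field is the kernel of a `k`-point. -/
private theorem exists_algHom_ker_eq {k T : Type*} [Field k] [IsAlgClosed k] [CommRing T]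
    [Algebra k T] [Algebra.FiniteType k T] (M : Ideal T) (hM : M.IsMaximal) :
    ∃ χ : T →ₐ[k] k, ∀ t, χ t = 0 ↔ t ∈ M := by
  haveI := hM
  letI : Field (T ⧸ M) := Ideal.Quotient.field M
  haveI : Algebra.FiniteType k (T ⧸ M) :=
    Algebra.FiniteType.of_surjective (Ideal.Quotient.mkₐ k M)
      (Ideal.Quotient.mkₐ_surjective k M)
  haveI : Module.Finite k (T ⧸ M) := finite_of_finite_type_of_isJacobsonRing k (T ⧸ M)
  have hsurj : Function.Surjective (algebraMap k (T ⧸ M)) :=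
    IsAlgClosed.algebraMap_bijective_of_isIntegral.2
  have hinj : Function.Injective (algebraMap k (T ⧸ M)) := (algebraMap k (T ⧸ M)).injective
  let e : k ≃+* (T ⧸ M) := RingEquiv.ofBijective (algebraMap k (T ⧸ M)) ⟨hinj, hsurj⟩
  have he : ∀ c : k, e c = algebraMap k (T ⧸ M) c := fun _ => rfl
  refine ⟨⟨(e.symm : (T ⧸ M) →+* k).comp (Ideal.Quotient.mk M), fun c => ?_⟩, fun t => ?_⟩
  · show e.symm (Ideal.Quotient.mk M (algebraMap k T c)) = c
    have : (Ideal.Quotient.mk M) (algebraMap k T c) = algebraMap k (T ⧸ M) c := rfl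
    rw [this, ← he, RingEquiv.symm_apply_apply]
  · show e.symm (Ideal.Quotient.mk M t) = 0 ↔ t ∈ M
    rw [map_eq_zero_iff e.symm e.symm.injective, Ideal.Quotient.eq_zero_iff_mem]

/-- In a finitely generated algebra over an algebraically closed field, an element killed by
all `k`-points is nilpotent. -/
private theorem isNilpotent_of_forall_algHom {k T : Type*} [Field k] [IsAlgClosed k] [CommRing T]
    [Algebra k T] [Algebra.FiniteType k T] {z : T} (h : ∀ χ : T →ₐ[k] k, χ z = 0) :
    IsNilpotent z := by
  haveI : IsJacobsonRing T := isJacobsonRing_of_finiteType (A := k)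
  rw [← mem_nilradical, nilradical, Ideal.radical_eq_jacobson, Ideal.jacobson]
  rw [Ideal.mem_sInf]
  rintro J ⟨-, hJ⟩
  obtain ⟨χ, hχ⟩ := exists_algHom_ker_eq (k := k) J hJ
  exact (hχ z).mp (h χ)

/-- A nilpotent element of a finite-dimensional algebra has nilpotency index at most the
dimension. -/
private theorem pow_eq_zero_of_finrank_le {k Q : Type*} [Field k] [CommRing Q] [Algebra k Q]
    [FiniteDimensional k Q] {z : Q} (hz : IsNilpotent z) {n : ℕ}
    (hn : Module.finrank k Q ≤ n) : z ^ n = 0 := by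
  by_contra hne
  set W : ℕ → Submodule k Q := fun i => (Ideal.span {z ^ i}).restrictScalars k with hW
  have hpowne : ∀ i ≤ n, z ^ i ≠ 0 := by
    intro i hi hzi
    apply hne
    obtain ⟨t, rfl⟩ := Nat.exists_eq_add_of_le hi
    rw [pow_add, hzi, zero_mul]
  have key : ∀ i, i ≤ n → Module.finrank k (W i) + i ≤ Module.finrank k Q := by
    intro i
    induction i with
    | zero =>
      intro _
      have : W 0 = ⊤ := by
        simp [hW, Ideal.span_singleton_one]
      rw [this, add_zero, finrank_top]
    | succ i IH =>
      intro hi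
      have hlt : W (i + 1) < W i := by
        refine lt_of_le_of_ne ?_ ?_
        · refine fun w hw => ?_
          have hw' : w ∈ Ideal.span {z ^ (i+1)} := hw
          have hle : Ideal.span {z ^ (i+1)} ≤ Ideal.span ({z ^ i} : Set Q) := by
            rw [Ideal.span_singleton_le_span_singleton]
            exact ⟨z, by rw [pow_succ]⟩
          exact hle hw'
        · intro heq
          have hz1 : z ^ i ∈ Ideal.span ({z ^ (i+1)} : Set Q) := by
            have : z ^ i ∈ W i := Ideal.mem_span_singleton_self (z ^ i)
            rw [← heq] at this
            exact this
          obtain ⟨a, ha⟩ := Ideal.mem_span_singleton'.mp hz1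
          have hnil : IsNilpotent (a * z) := (Commute.all a z).isNilpotent_mul_left hz
          have hu : IsUnit (1 - a * z) := hnil.isUnit_one_sub
          have h0 : z ^ i * (1 - a * z) = 0 := by
            have hx : z ^ i * (a * z) = a * z ^ (i + 1) := by ring
            rw [mul_sub, mul_one, hx, ha, sub_self]
          exact hpowne i (Nat.le_of_succ_le hi) ((hu.mul_left_eq_zero).mp h0)
      have hfr : Module.finrank k (W (i+1)) < Module.finrank k (W i) :=
        Submodule.finrank_lt_finrank_of_lt hlt
      have := IH (Nat.le_of_succ_le hi)
      omega
  have h1 := key n le_rfl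
  have h2 : Module.finrank k (W n) = 0 := by omega
  have h3 : W n = ⊥ := by
    rw [← Submodule.finrank_eq_zero (R := k)]
    exact h2
  have : z ^ n ∈ W n := Ideal.mem_span_singleton_self (z ^ n)
  rw [h3] at this
  exact hne this

/-- One step of a "Jacobson filtration". -/
private def JStep {R M : Type*} [CommRing R] [AddCommGroup M] [Module R M]
    (P Q : Submodule R M) : Prop :=
  ∀ x ∈ Q, (∀ m : Ideal R, m.IsMaximal → x ∈ m • Q ⊔ P) → x ∈ P

private theorem jStep_self {R M : Type*} [CommRing R] [AddCommGroup M] [Module R M]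
    (N : Submodule R M) : JStep N N := fun x hx _ => hx

/-- Every finite module over a Noetherian Jacobson ring admits a finite filtration each of
whose steps satisfies `JStep`. -/
private theorem exists_jacobson_filtration (R M : Type*) [CommRing R] [IsNoetherianRing R]
    [IsJacobsonRing R] [AddCommGroup M] [Module R M] [Module.Finite R M] :
    ∃ (n : ℕ) (F : ℕ → Submodule R M), F 0 = ⊥ ∧ F n = ⊤ ∧ ∀ i, JStep (F i) (F (i + 1)) := by
  haveI : IsNoetherian R M := isNoetherian_of_isNoetherianRing_of_finite R M
  set 𝒢 : Set (Submodule R M) :=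
    {N | ∃ (n : ℕ) (F : ℕ → Submodule R M), F 0 = ⊥ ∧ F n = N ∧ ∀ i, JStep (F i) (F (i + 1))}
    with h𝒢
  have hbot : (⊥ : Submodule R M) ∈ 𝒢 := ⟨0, fun _ => ⊥, rfl, rfl, fun _ => jStep_self ⊥⟩
  obtain ⟨N, hN, hmax⟩ := (set_has_maximal_iff_noetherian.mpr ‹IsNoetherian R M›) 𝒢 ⟨⊥, hbot⟩
  by_cases hNT : N = ⊤
  · obtain ⟨n, F, h0, hn, hstep⟩ := hN
    exact ⟨n, F, h0, hNT ▸ hn, hstep⟩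
  exfalso
  haveI : Nontrivial (M ⧸ N) :=
    Submodule.Quotient.nontrivial_iff.mpr hNT
  obtain ⟨p, hp⟩ := associatedPrimes.nonempty R (M ⧸ N)
  obtain ⟨hpprime, x, hx⟩ := (isAssociatedPrime_iff).mp hp
  rw [Submodule.bot_colon'] at hx
  have hx0 : x ≠ 0 := by
    rintro rfl
    rw [Submodule.span_singleton_eq_bot.mpr rfl, Submodule.annihilator_bot] at hx
    exact hpprime.ne_top hx
  set C : Submodule R (M ⧸ N) := Submodule.span R {x} with hC
  set N' : Submodule R M := C.comap N.mkQ with hN'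
  have hmapN' : Submodule.map N.mkQ N' = C :=
    Submodule.map_comap_eq_of_surjective (Submodule.mkQ_surjective N) C
  have hNleN' : N ≤ N' := by
    intro y hy
    have : N.mkQ y = 0 := (Submodule.Quotient.mk_eq_zero N).mpr hy
    show N.mkQ y ∈ C
    rw [this]; exact C.zero_mem
  have hNN' : N < N' := by
    refine lt_of_le_of_ne hNleN' ?_
    intro heq
    obtain ⟨y, hy⟩ := Submodule.mkQ_surjective N x
    have hyN' : y ∈ N' := by
      show N.mkQ y ∈ C
      rw [hy]; exact Submodule.mem_span_singleton_self x
    rw [← heq] at hyN'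
    exact hx0 (by rw [← hy]; exact (Submodule.Quotient.mk_eq_zero N).mpr hyN')
  have hJ : JStep N N' := by
    intro y hyN' hy
    have hxy : N.mkQ y ∈ C := hyN'
    obtain ⟨r, hr⟩ := Submodule.mem_span_singleton.mp hxy
    have hrp : r ∈ p := by
      have hjac : ∀ m : Ideal R, m.IsMaximal → p ≤ m → r ∈ m := by
        intro m hm hpm
        have h1 := hy m hm
        have h2 : N.mkQ y ∈ Submodule.map N.mkQ (m • N' ⊔ N) :=
          Submodule.mem_map_of_mem h1
        rw [Submodule.map_sup, Submodule.map_smul''] at h2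
        have h3 : Submodule.map N.mkQ N = ⊥ := by
          rw [Submodule.eq_bot_iff]
          rintro _ ⟨w, hw, rfl⟩
          exact (Submodule.Quotient.mk_eq_zero N).mpr hw
        rw [h3, hmapN', sup_bot_eq] at h2
        rw [← hr] at h2
        obtain ⟨c, hcm, hc⟩ := Submodule.mem_smul_span_singleton.mp h2
        have : r - c ∈ p := by
          rw [hx, Submodule.mem_annihilator_span_singleton, sub_smul, hc, sub_self]
        have hrc : r = (r - c) + c := by ring
        rw [hrc]
        exact m.add_mem (hpm this) hcm
      have hradical : p.jacobson = p := by
        rw [← Ideal.radical_eq_jacobson, hpprime.radical]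
      rw [← hradical, Ideal.jacobson]
      rw [Ideal.mem_sInf]
      rintro J ⟨hpJ, hJmax⟩
      exact hjac J hJmax hpJ
    have : N.mkQ y = 0 := by
      rw [← hr]
      have : r • x = 0 := by
        rw [hx, Submodule.mem_annihilator_span_singleton] at hrp
        exact hrp
      exact this
    exact (Submodule.Quotient.mk_eq_zero N).mp this
  -- extend the filtration of N by one step
  obtain ⟨n, F, h0, hn, hstep⟩ := hN
  have hN'𝒢 : N' ∈ 𝒢 := by
    refine ⟨n + 1, fun i => if i ≤ n then F i else N', by simp [h0], by simp, ?_⟩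
    intro i
    by_cases h1 : i + 1 ≤ n
    · have h2 : i ≤ n := Nat.le_of_succ_le h1
      simp only [if_pos h1, if_pos h2]
      exact hstep i
    · by_cases h2 : i ≤ n
      · have h3 : i = n := by omega
        subst h3
        simp only [if_neg h1, if_pos h2, hn]
        exact hJ
      · simp only [if_neg h1, if_neg h2]
        exact jStep_self N'
  exact hmax N' hN'𝒢 hNN'

section ToA

variable {k : Type*} [Field k] {B : Type*} [CommRing B] [Algebra k B]

/-- An intermediate subalgebra `D` with `A ≤ D`, viewed as an `A`-submodule of `B`. -/
private def toA (A D : Subalgebra k B) (hAD : A ≤ D) : Submodule (↥A) B where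
  carrier := D
  add_mem' := fun h1 h2 => D.add_mem h1 h2
  zero_mem' := D.zero_mem
  smul_mem' := fun a x hx => by
    have : a • x = (a : B) * x := by
      rw [Algebra.smul_def]
      rfl
    rw [this]
    exact D.mul_mem (hAD a.2) hx

private theorem mem_toA {A D : Subalgebra k B} {hAD : A ≤ D} {x : B} :
    x ∈ toA A D hAD ↔ x ∈ D := Iff.rfl

private theorem coe_algebraMap_subalg (A : Subalgebra k B) (a : ↥A) :
    algebraMap (↥A) B a = (a : B) := rfl

/-- `D` is stable under multiplication into `m • toA`. -/
private theorem mul_mem_smul_toA {A D : Subalgebra k B} (hAD : A ≤ D) {m : Ideal ↥A}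
    {d w : B} (hd : d ∈ D) (hw : w ∈ m • toA A D hAD) : d * w ∈ m • toA A D hAD := by
  refine Submodule.smul_induction_on hw ?_ ?_
  · intro a ha n hn
    have hrw : d * (a • n) = a • (d * n) := by
      rw [Algebra.smul_def, Algebra.smul_def]
      ring
    rw [hrw]
    exact Submodule.smul_mem_smul ha (D.mul_mem hd hn)
  · intro w₁ w₂ h₁ h₂
    rw [mul_add]
    exact Submodule.add_mem _ h₁ h₂

private theorem mul_mem_one_sup_smul {A D : Subalgebra k B} (hAD : A ≤ D) {m : Ideal ↥A}
    {u v : B} (hu : u ∈ (1 : Submodule (↥A) B) ⊔ m • toA A D hAD)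
    (hv : v ∈ (1 : Submodule (↥A) B) ⊔ m • toA A D hAD) :
    u * v ∈ (1 : Submodule (↥A) B) ⊔ m • toA A D hAD := by
  obtain ⟨u₁, hu₁, u₂, hu₂, rfl⟩ := Submodule.mem_sup.mp hu
  obtain ⟨v₁, hv₁, v₂, hv₂, rfl⟩ := Submodule.mem_sup.mp hv
  obtain ⟨a, rfl⟩ := Submodule.mem_one.mp hu₁
  obtain ⟨b, rfl⟩ := Submodule.mem_one.mp hv₁
  have expand : (algebraMap (↥A) B a + u₂) * (algebraMap (↥A) B b + v₂)
      = algebraMap (↥A) B (a * b)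
        + (a • v₂ + b • u₂ + u₂ * v₂) := by
    rw [map_mul, Algebra.smul_def, Algebra.smul_def]
    ring
  rw [expand]
  refine Submodule.add_mem _ (Submodule.mem_sup_left (Submodule.mem_one.mpr ⟨a * b, rfl⟩))
    (Submodule.mem_sup_right ?_)
  refine Submodule.add_mem _ (Submodule.add_mem _ ?_ ?_) ?_
  · exact Submodule.smul_mem _ _ hv₂
  · exact Submodule.smul_mem _ _ hu₂
  · exact mul_mem_smul_toA hAD (Submodule.smul_le_right hu₂) hv₂

end ToA

set_option maxHeartbeats 1000000 in
set_option synthInstance.maxHeartbeats 400000 in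
/-- Let `k` be an algebraically closed field of characteristic `p > 0`. Let `A ⊆ B` be
commutative `k`-algebras, both finitely generated as `k`-algebras, with `B` finite as an
`A`-module. If restriction gives a bijection from `k`-algebra homomorphisms `B → k` to
`k`-algebra homomorphisms `A → k`, then for every `b ∈ B` there is `m : ℕ` with
`b ^ (p ^ m) ∈ A`. -/
theorem powers_land_in_subalgebra_of_bijective_on_points
    (k : Type*) [Field k] [IsAlgClosed k] (p : ℕ) (hp : p.Prime) [CharP k p]
    (B : Type*) [CommRing B] [Algebra k B] (A : Subalgebra k B)
    (hAfg : A.FG) (hBfg : (⊤ : Subalgebra k B).FG)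
    (hfin : Module.Finite A B)
    (hbij : Function.Bijective (fun φ : B →ₐ[k] k => φ.comp A.val)) :
    ∀ b : B, ∃ m : ℕ, b ^ p ^ m ∈ A := by
  intro b
  classical
  rcases subsingleton_or_nontrivial B with hB | hB
  · exact ⟨0, by rw [Subsingleton.elim (b ^ p ^ 0) (0 : B)]; exact A.zero_mem⟩
  haveI := Fact.mk hp
  haveI : Algebra.FiniteType k ↥A := (Subalgebra.fg_iff_finiteType A).mp hAfg
  haveI : Algebra.FiniteType k B := ⟨hBfg⟩
  haveI : IsNoetherianRing ↥A := Algebra.FiniteType.isNoetherianRing k ↥A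
  haveI : IsNoetherian (↥A) B := isNoetherian_of_isNoetherianRing_of_finite (↥A) B
  haveI : IsJacobsonRing ↥A := isJacobsonRing_of_finiteType (A := k)
  haveI : Algebra.IsIntegral (↥A) B := Algebra.IsIntegral.of_finite (↥A) B
  -- extension of points from any intermediate subalgebra to B
  have hext : ∀ (D : Subalgebra k B), A ≤ D → ∀ φ : (↥D) →ₐ[k] k,
      ∃ Φ : B →ₐ[k] k, Φ.comp D.val = φ := by
    intro D hAD φ
    letI : Algebra (↥A) (↥D) := ((Subalgebra.inclusion hAD).toRingHom).toAlgebra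
    haveI : IsScalarTower (↥A) (↥D) B := IsScalarTower.of_algebraMap_eq (fun a => rfl)
    haveI : Algebra.IsIntegral (↥D) B :=
      ⟨fun x => (Algebra.IsIntegral.isIntegral (R := ↥A) x).tower_top⟩
    have hφsurj : Function.Surjective φ.toRingHom :=
      fun c => ⟨algebraMap k (↥D) c, φ.commutes c⟩
    haveI hkmax : (RingHom.ker φ.toRingHom).IsMaximal :=
      RingHom.ker_isMaximal_of_surjective φ.toRingHom hφsurj
    have hker : RingHom.ker (algebraMap (↥D) B) ≤ RingHom.ker φ.toRingHom := by
      intro d hd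
      have : (d : B) = 0 := hd
      have hd0 : d = 0 := Subtype.ext this
      rw [hd0]
      exact (RingHom.ker φ.toRingHom).zero_mem
    obtain ⟨Q, hQmax, hQcomap⟩ :=
      Ideal.exists_ideal_over_maximal_of_isIntegral (RingHom.ker φ.toRingHom) hker
    obtain ⟨χ, hχ⟩ := exists_algHom_ker_eq (k := k) Q hQmax
    refine ⟨χ, ?_⟩
    apply algHom_eq_of_ker_le
    intro d hd
    have hdQ : (d : B) ∈ Q := by
      have : d ∈ RingHom.ker φ.toRingHom := hd
      rw [← hQcomap] at this
      exact this
    exact (hχ _).mpr hdQ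
  -- uniqueness of points over A
  have huniq : ∀ (D : Subalgebra k B) (hAD : A ≤ D) (χ₁ χ₂ : (↥D) →ₐ[k] k),
      (χ₁.comp (Subalgebra.inclusion hAD) = χ₂.comp (Subalgebra.inclusion hAD)) → χ₁ = χ₂ := by
    intro D hAD χ₁ χ₂ h
    obtain ⟨Φ₁, hΦ₁⟩ := hext D hAD χ₁
    obtain ⟨Φ₂, hΦ₂⟩ := hext D hAD χ₂
    have e1 : Φ₁.comp A.val = (χ₁.comp (Subalgebra.inclusion hAD)) := by
      rw [← hΦ₁]; ext a; rfl
    have e2 : Φ₂.comp A.val = (χ₂.comp (Subalgebra.inclusion hAD)) := by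
      rw [← hΦ₂]; ext a; rfl
    have : Φ₁ = Φ₂ := hbij.injective (by simpa using e1.trans (h.trans e2.symm))
    rw [← hΦ₁, ← hΦ₂, this]
  -- the step lemma
  have step : ∀ (D : Subalgebra k B) (hAD : A ≤ D), ∃ s : ℕ,
      ∀ x ∈ D, ∀ m : Ideal ↥A, m.IsMaximal →
        x ^ p ^ s ∈ (1 : Submodule (↥A) B) ⊔ m • toA A D hAD := by
    intro D hAD
    have hfgD : (toA A D hAD).FG := IsNoetherian.noetherian _
    obtain ⟨G, hG⟩ := hfgD
    refine ⟨G.card, ?_⟩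
    intro x hx m hm
    haveI := hm
    set ι : (↥A) →ₐ[k] (↥D) := Subalgebra.inclusion hAD with hιdef
    set J : Ideal (↥D) := Ideal.map ι m with hJdef
    obtain ⟨φm, hφm⟩ := exists_algHom_ker_eq (k := k) m hm
    obtain ⟨Φ, hΦ⟩ := hext A le_rfl φm
    set χ₀ : (↥D) →ₐ[k] k := Φ.comp D.val with hχ₀def
    have hres : ∀ a : ↥A, χ₀ (ι a) = φm a := by
      intro a
      have h1 : χ₀ (ι a) = Φ (A.val a) := rfl
      rw [h1, ← hΦ]
      rfl
    have hχ₀m : ∀ a : ↥A, a ∈ m → χ₀ (ι a) = 0 := fun a ha => by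
      rw [hres]; exact (hφm a).mpr ha
    have hχ₀J : ∀ d ∈ J, χ₀ d = 0 := by
      have hle : J ≤ RingHom.ker χ₀.toRingHom :=
        Ideal.map_le_iff_le_comap.mpr (fun a ha => by
          simp only [Ideal.mem_comap, RingHom.mem_ker]
          exact hχ₀m a ha)
      exact fun d hd => hle hd
    have huniq' : ∀ χ : (↥D) →ₐ[k] k, (∀ d ∈ J, χ d = 0) → χ = χ₀ := by
      intro χ hχ
      refine huniq D hAD χ χ₀ ?_
      have h₁ : χ.comp ι = φm := by
        apply algHom_eq_of_ker_le (φ := φm)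
        intro a ha
        exact hχ _ (Ideal.mem_map_of_mem _ ((hφm a).mp ha))
      have h₂ : χ₀.comp ι = φm := by
        apply algHom_eq_of_ker_le (φ := φm)
        intro a ha
        exact hχ₀m a ((hφm a).mp ha)
      rw [h₁, h₂]
    haveI : Nontrivial (↥D) := ⟨⟨1, 0, fun h => one_ne_zero (congrArg Subtype.val h)⟩⟩
    haveI : CharP (↥D) p := charP_of_injective_algebraMap (algebraMap k (↥D)).injective p
    set mk' : (↥D) →ₐ[k] ((↥D) ⧸ J) := Ideal.Quotient.mkₐ k J with hmk'
    have hmkmk : ∀ w : ↥D, mk' w = Ideal.Quotient.mk J w := fun w => rfl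
    set g : B → ((↥D) ⧸ J) := fun w => if h : w ∈ D then mk' ⟨w, h⟩ else 0 with hg
    set T : Finset ((↥D) ⧸ J) := G.image g with hT
    have hspan : Submodule.span k (↑T : Set ((↥D) ⧸ J)) = ⊤ := by
      rw [Submodule.eq_top_iff']
      intro q
      obtain ⟨d, rfl⟩ := Ideal.Quotient.mkₐ_surjective k J q
      have hdmem : (d : B) ∈ Submodule.span (↥A) (↑G : Set B) := by rw [hG]; exact d.2
      have key : ∀ (w : B) (_ : w ∈ Submodule.span (↥A) (↑G : Set B)),
          ∀ (hwD : w ∈ D), mk' ⟨w, hwD⟩ ∈ Submodule.span k (↑T : Set ((↥D) ⧸ J)) := by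
        intro w hw
        refine Submodule.span_induction ?_ ?_ ?_ ?_ hw
        · intro y hy hyD
          apply Submodule.subset_span
          have h1 : mk' ⟨y, hyD⟩ = g y := by rw [hg]; simp only [hyD, dif_pos]
          rw [h1]
          exact Finset.mem_coe.mpr (Finset.mem_image_of_mem g hy)
        · intro h0D
          have h1 : (⟨0, h0D⟩ : ↥D) = 0 := rfl
          rw [h1, map_zero]
          exact Submodule.zero_mem _
        · intro y z hy hz hy' hz' hyzD
          have hyD : y ∈ D := by
            have := hG ▸ hy
            exact mem_toA.mp this
          have hzD : z ∈ D := by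
            have := hG ▸ hz
            exact mem_toA.mp this
          have h1 : (⟨y + z, hyzD⟩ : ↥D) = ⟨y, hyD⟩ + ⟨z, hzD⟩ := rfl
          rw [h1, map_add]
          exact Submodule.add_mem _ (hy' hyD) (hz' hzD)
        · intro a y hy hy' hayD
          have hyD : y ∈ D := by
            have := hG ▸ hy
            exact mem_toA.mp this
          have h1 : (⟨a • y, hayD⟩ : ↥D) = ι a * ⟨y, hyD⟩ := by
            apply Subtype.ext
            show a • y = (a : B) * y
            rw [Algebra.smul_def]
            rfl
          set c : k := φm a with hc
          have hrm : a - algebraMap k (↥A) c ∈ m := by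
            apply (hφm _).mp
            rw [map_sub, AlgHom.commutes, Algebra.algebraMap_self_apply, sub_self]
          have h2 : mk' (ι a) = algebraMap k ((↥D) ⧸ J) c := by
            have ha' : ι a = algebraMap k (↥D) c + ι (a - algebraMap k (↥A) c) := by
              rw [map_sub, AlgHom.commutes]
              ring
            rw [ha', map_add]
            have h3 : mk' (ι (a - algebraMap k (↥A) c)) = 0 := by
              rw [hmkmk, Ideal.Quotient.eq_zero_iff_mem]
              exact Ideal.mem_map_of_mem _ hrm
            rw [h3, add_zero, AlgHom.commutes]
          rw [h1, map_mul, h2, ← Algebra.smul_def]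
          exact Submodule.smul_mem _ _ (hy' hyD)
      exact key (d : B) hdmem d.2
    haveI hfinQ : Module.Finite k ((↥D) ⧸ J) := ⟨⟨T, hspan⟩⟩
    have hrank : Module.finrank k ((↥D) ⧸ J) ≤ G.card := by
      have h1 : Module.finrank k ((↥D) ⧸ J)
          = Module.finrank k (Submodule.span k (↑T : Set ((↥D) ⧸ J))) := by
        rw [hspan, finrank_top]
      rw [h1]
      refine le_trans (finrank_span_le_card _) ?_
      rw [Finset.toFinset_coe]
      exact Finset.card_image_le
    set c0 : k := χ₀ ⟨x, hx⟩ with hc0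
    have hnil : IsNilpotent (mk' (⟨x, hx⟩ - algebraMap k (↥D) c0)) := by
      apply isNilpotent_of_forall_algHom (k := k)
      intro ξ
      have hkill : ∀ d ∈ J, (ξ.comp mk') d = 0 := by
        intro d hd
        have h0 : mk' d = 0 := by
          rw [hmkmk, Ideal.Quotient.eq_zero_iff_mem]
          exact hd
        show ξ (mk' d) = 0
        rw [h0, map_zero]
      have hu := huniq' (ξ.comp mk') hkill
      have h1 : ξ (mk' (⟨x, hx⟩ - algebraMap k (↥D) c0)) = (ξ.comp mk') (⟨x, hx⟩ - algebraMap k (↥D) c0) := rfl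
      rw [h1, hu, map_sub, AlgHom.commutes, Algebra.algebraMap_self_apply, hc0, sub_self]
    have hq : (mk' (⟨x, hx⟩ - algebraMap k (↥D) c0)) ^ p ^ G.card = 0 :=
      pow_eq_zero_of_finrank_le hnil
        (le_trans hrank (Nat.le_of_lt (Nat.lt_pow_self hp.one_lt)))
    have hfrob : (⟨x, hx⟩ : ↥D) ^ p ^ G.card - algebraMap k (↥D) (c0 ^ p ^ G.card) ∈ J := by
      have h1 : mk' ((⟨x, hx⟩ - algebraMap k (↥D) c0) ^ p ^ G.card) = 0 := by
        rw [map_pow, hq]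
      rw [sub_pow_char_pow] at h1
      rw [← map_pow (algebraMap k (↥D)) c0] at h1
      rw [hmkmk, Ideal.Quotient.eq_zero_iff_mem] at h1
      exact h1
    have hJmem : ∀ d ∈ J, (d : B) ∈ m • toA A D hAD := by
      intro d hd
      have hd' : d ∈ Ideal.span (⇑ι '' (↑m : Set ↥A)) := hd
      refine Submodule.span_induction ?_ ?_ ?_ ?_ hd'
      · rintro _ ⟨a, ham, rfl⟩
        have h1 : ((ι a : ↥D) : B) = a • (1 : B) := by
          rw [Algebra.smul_def, mul_one]
          rfl
        rw [h1]
        exact Submodule.smul_mem_smul ham (mem_toA.mpr D.one_mem)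
      · show ((0 : ↥D) : B) ∈ _
        rw [ZeroMemClass.coe_zero]
        exact Submodule.zero_mem _
      · intro y z _ _ hy' hz'
        show ((y + z : ↥D) : B) ∈ _
        rw [AddMemClass.coe_add]
        exact Submodule.add_mem _ hy' hz'
      · intro r y _ hy'
        show ((r • y : ↥D) : B) ∈ _
        have h1 : ((r • y : ↥D) : B) = (r : B) * (y : B) := by
          rw [smul_eq_mul]
          rfl
        rw [h1]
        exact mul_mem_smul_toA hAD r.2 hy'
    have hcoe : (((⟨x, hx⟩ : ↥D) ^ p ^ G.card - algebraMap k (↥D) (c0 ^ p ^ G.card) : ↥D) : B)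
        = x ^ p ^ G.card - algebraMap k B (c0 ^ p ^ G.card) := by
      have h1 : (((⟨x, hx⟩ : ↥D) ^ p ^ G.card - algebraMap k (↥D) (c0 ^ p ^ G.card) : ↥D) : B)
          = D.val ((⟨x, hx⟩ : ↥D) ^ p ^ G.card - algebraMap k (↥D) (c0 ^ p ^ G.card)) := rfl
      rw [h1, map_sub, map_pow, AlgHom.commutes]
      rfl
    have hxq : x ^ p ^ G.card = algebraMap k B (c0 ^ p ^ G.card) +
        (((⟨x, hx⟩ : ↥D) ^ p ^ G.card - algebraMap k (↥D) (c0 ^ p ^ G.card) : ↥D) : B) := by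
      rw [hcoe]
      ring
    rw [hxq]
    refine Submodule.add_mem _ (Submodule.mem_sup_left (Submodule.mem_one.mpr
      ⟨algebraMap k (↥A) (c0 ^ p ^ G.card), (IsScalarTower.algebraMap_apply k (↥A) B _).symm⟩))
      (Submodule.mem_sup_right ?_)
    exact hJmem _ hfrob
  -- the filtration and downward induction
  set N₀ : Submodule (↥A) B := 1 with hN₀
  obtain ⟨n, F, hF0, hFn, hFstep⟩ :=
    exists_jacobson_filtration (↥A) (B ⧸ N₀)
  set π := N₀.mkQ with hπ
  have main : ∀ i, ∀ (D : Subalgebra k B) (hAD : A ≤ D),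
      Submodule.map π (toA A D hAD) ≤ F i → ∀ x ∈ D, ∃ s : ℕ, x ^ p ^ s ∈ A := by
    intro i
    induction i with
    | zero =>
      intro D hAD hle x hxD
      have h1 : π x ∈ F 0 := hle (Submodule.mem_map_of_mem (mem_toA.mpr hxD))
      rw [hF0] at h1
      have h2 : x ∈ N₀ := by
        rwa [hπ, Submodule.mem_bot, Submodule.mkQ_apply, Submodule.Quotient.mk_eq_zero] at h1
      obtain ⟨a, ha⟩ := Submodule.mem_one.mp h2
      refine ⟨0, ?_⟩
      rw [pow_zero, pow_one, ← ha]
      exact a.2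
    | succ i IH =>
      intro D hAD hle x hxD
      obtain ⟨s₀, hs₀⟩ := step D hAD
      set D' : Subalgebra k B :=
        { carrier := {w | w ∈ D ∧ ∀ m : Ideal ↥A, m.IsMaximal →
            w ∈ (1 : Submodule (↥A) B) ⊔ m • toA A D hAD},
          mul_mem' := fun hu hv =>
            ⟨D.mul_mem hu.1 hv.1, fun m hm => mul_mem_one_sup_smul hAD (hu.2 m hm) (hv.2 m hm)⟩,
          one_mem' := ⟨D.one_mem, fun m _ =>
            Submodule.mem_sup_left (Submodule.mem_one.mpr ⟨1, map_one _⟩)⟩,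
          add_mem' := fun hu hv =>
            ⟨D.add_mem hu.1 hv.1, fun m hm => Submodule.add_mem _ (hu.2 m hm) (hv.2 m hm)⟩,
          zero_mem' := ⟨D.zero_mem, fun m _ =>
            Submodule.mem_sup_left (Submodule.zero_mem _)⟩,
          algebraMap_mem' := fun c =>
            ⟨D.algebraMap_mem c, fun m _ => Submodule.mem_sup_left (Submodule.mem_one.mpr
              ⟨algebraMap k (↥A) c, by rw [← IsScalarTower.algebraMap_apply]⟩)⟩ } with hD'
      have hAD' : A ≤ D' := fun a ha =>
        ⟨hAD ha, fun m _ => Submodule.mem_sup_left (Submodule.mem_one.mpr ⟨⟨a, ha⟩, rfl⟩)⟩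
      have hle' : Submodule.map π (toA A D' hAD') ≤ F i := by
        rintro _ ⟨w, hw, rfl⟩
        obtain ⟨hwD, hwm⟩ := hw
        refine hFstep i (π w) (hle (Submodule.mem_map_of_mem (mem_toA.mpr hwD))) ?_
        intro m hm
        have h1 := hwm m hm
        have h2 : π w ∈ Submodule.map π ((1 : Submodule (↥A) B) ⊔ m • toA A D hAD) :=
          Submodule.mem_map_of_mem h1
        rw [Submodule.map_sup, Submodule.map_smul''] at h2
        have h3 : Submodule.map π (1 : Submodule (↥A) B) = ⊥ := by
          rw [Submodule.eq_bot_iff]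
          rintro _ ⟨w', hw', rfl⟩
          rw [hπ, Submodule.mkQ_apply, Submodule.Quotient.mk_eq_zero]
          exact hw'
        rw [h3, bot_sup_eq] at h2
        have h4 : m • Submodule.map π (toA A D hAD) ≤ m • F (i + 1) :=
          smul_mono_right m hle
        exact Submodule.mem_sup_left (h4 h2)
      have hx' : x ^ p ^ s₀ ∈ D' := ⟨D.pow_mem hxD _, fun m hm => hs₀ x hxD m hm⟩
      obtain ⟨s₁, hs₁⟩ := IH D' hAD' hle' _ hx'
      refine ⟨s₀ + s₁, ?_⟩
      rw [pow_add, pow_mul]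
      exact hs₁
  have hb : b ∈ (⊤ : Subalgebra k B) := trivial
  exact main n ⊤ le_top (by rw [hFn]; exact le_top) b hb
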